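/- Let f(y) = (1/2)y². If (x, y, x̃) : [0,1] → ℝ³ is a solution of the geodesic system x'' = 0, y'' = −(x')²·y, x̃'' = 2y·x'·y' with x(1) = x(0) + 2π, then y(1) = y(0). In particular, for any point P = (x₀, y₀, z₀) and any y₁ ≠ y₀ and z₁ ∈ ℝ, there is no solution γ of the geodesic system on [0,1] with γ(0) = P and γ(1) = (x₀ + 2π, y₁, z₁); hence the exponential map of S₊ at P is not surjective. -/

import Mathlib

private lemma diffDeriv {f : ℝ → ℝ} (hf : ContDiff ℝ 2 f) : Differentiable ℝ (deriv f) := by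
  have h : ContDiff ℝ ((1:WithTop ℕ∞) + 1) f := by norm_num; exact hf
  exact ((contDiff_succ_iff_deriv.mp h).2.2).differentiable (by norm_num)

private lemma endpoints_eq {g : ℝ → ℝ} (hg : Differentiable ℝ g)
    (h0 : ∀ t ∈ Set.Icc (0:ℝ) 1, deriv g t = 0) : g 1 = g 0 := by
  refine constant_of_derivWithin_zero (a := 0) (b := 1) hg.differentiableOn ?_ 1 (by norm_num)
  intro t ht
  have ht' : t ∈ Set.Icc (0:ℝ) 1 := Set.Ico_subset_Icc_self ht
  rw [DifferentiableAt.derivWithin (hg t) ((uniqueDiffOn_Icc zero_lt_one) t ht')]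
  exact h0 t ht'

private lemma key (x y : ℝ → ℝ) (hx : ContDiff ℝ 2 x) (hy : ContDiff ℝ 2 y)
    (hxeq : ∀ t ∈ Set.Icc (0:ℝ) 1, deriv (deriv x) t = 0)
    (hyeq : ∀ t ∈ Set.Icc (0:ℝ) 1, deriv (deriv y) t = -(deriv x t) ^ 2 * y t)
    (hx1 : x 1 = x 0 + 2 * Real.pi) : y 1 = y 0 := by
  set ω : ℝ := 2 * Real.pi with hω
  have hωpos : 0 < ω := by positivity
  -- deriv x is constant on [0,1]
  have hdx : Differentiable ℝ (deriv x) := diffDeriv hx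
  have hxdiff : Differentiable ℝ x := hx.differentiable (by norm_num)
  have hconst : ∀ t ∈ Set.Icc (0:ℝ) 1, deriv x t = deriv x 0 := by
    intro t ht
    have : (fun s => deriv x (t * s)) 1 = (fun s => deriv x (t * s)) 0 := by
      refine endpoints_eq (g := fun s => deriv x (t * s)) ?_ ?_
      · exact hdx.comp (differentiable_id.const_mul t)
      · intro s hs
        have h1 : HasDerivAt (fun s => deriv x (t * s)) (deriv (deriv x) (t * s) * t) s := by
          exact ((hdx (t * s)).hasDerivAt.comp s ((hasDerivAt_id s).const_mul t)).congr_deriv (by ring)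
        rw [h1.deriv, hxeq (t * s)]
        · ring
        · constructor
          · exact mul_nonneg ht.1 hs.1
          · calc t * s ≤ 1 * 1 := mul_le_mul ht.2 hs.2 hs.1 zero_le_one
              _ = 1 := by norm_num
    simpa using this
  -- deriv x 0 = ω
  have hc : deriv x 0 = ω := by
    have h2 : (fun t => x t - deriv x 0 * t) 1 = (fun t => x t - deriv x 0 * t) 0 := by
      refine endpoints_eq (g := fun t => x t - deriv x 0 * t) ?_ ?_
      · exact hxdiff.sub (differentiable_id.const_mul _)
      · intro t ht
        have h1 : HasDerivAt (fun t => x t - deriv x 0 * t) (deriv x t - deriv x 0) t :=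
          (hxdiff t).hasDerivAt.sub (((hasDerivAt_id t).const_mul (deriv x 0)).congr_deriv
            (by ring))
        rw [h1.deriv, hconst t ht, sub_self]
    simp only at h2
    rw [hx1] at h2
    linarith
  -- set up comparison solution
  set A : ℝ := y 0 with hA
  set B : ℝ := deriv y 0 with hB
  set z : ℝ → ℝ := fun t => A * Real.cos (ω * t) + (B / ω) * Real.sin (ω * t) with hz
  set zd : ℝ → ℝ := fun t => -A * ω * Real.sin (ω * t) + B * Real.cos (ω * t) with hzd
  have hωt : ∀ t : ℝ, HasDerivAt (fun s : ℝ => ω * s) ω t := fun t =>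
    (hasDerivAt_id t).const_mul ω |>.congr_deriv (by ring)
  have hzderiv : ∀ t : ℝ, HasDerivAt z (zd t) t := by
    intro t
    have h1 : HasDerivAt (fun s => Real.cos (ω * s)) (-Real.sin (ω * t) * ω) t := (hωt t).cos
    have h2 : HasDerivAt (fun s => Real.sin (ω * s)) (Real.cos (ω * t) * ω) t := (hωt t).sin
    have := (h1.const_mul A).add (h2.const_mul (B / ω))
    apply this.congr_deriv
    field_simp [hzd]
    ring
  have hzdderiv : ∀ t : ℝ, HasDerivAt zd (-ω ^ 2 * z t) t := by
    intro t
    have h1 : HasDerivAt (fun s => Real.cos (ω * s)) (-Real.sin (ω * t) * ω) t := (hωt t).cos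
    have h2 : HasDerivAt (fun s => Real.sin (ω * s)) (Real.cos (ω * t) * ω) t := (hωt t).sin
    have := (h2.const_mul (-A * ω)).add (h1.const_mul B)
    apply this.congr_deriv
    rw [hz]
    field_simp [hωpos.ne']
    ring
  have hdy : Differentiable ℝ (deriv y) := diffDeriv hy
  have hydiff : Differentiable ℝ y := hy.differentiable (by norm_num)
  -- energy function
  set F : ℝ → ℝ := fun t => (deriv y t - zd t) ^ 2 + ω ^ 2 * (y t - z t) ^ 2 with hF
  have hFderiv : ∀ t : ℝ, HasDerivAt F
      (2 * (deriv y t - zd t) * (deriv (deriv y) t - (-ω ^ 2 * z t))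
        + ω ^ 2 * (2 * (y t - z t) * (deriv y t - zd t))) t := by
    intro t
    have h1 : HasDerivAt (fun s => deriv y s - zd s)
        (deriv (deriv y) t - (-ω ^ 2 * z t)) t :=
      (hdy t).hasDerivAt.sub (hzdderiv t)
    have h2 : HasDerivAt (fun s => y s - z s) (deriv y t - zd t) t :=
      (hydiff t).hasDerivAt.sub (hzderiv t)
    have e1 := h1.pow 2
    have e2 := (h2.pow 2).const_mul (ω ^ 2)
    have := e1.add e2
    apply this.congr_deriv
    ring
  have hF1 : F 1 = F 0 := by
    apply endpoints_eq
    · exact fun t => (hFderiv t).differentiableAt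
    · intro t ht
      rw [(hFderiv t).deriv, hyeq t ht, hconst t ht, hc]
      ring
  have hF0 : F 0 = 0 := by
    simp [hF, hz, hzd, hA, hB]
  rw [hF0] at hF1
  have hsq1 : (deriv y 1 - zd 1) ^ 2 ≥ 0 := sq_nonneg _
  have hsq2 : (y 1 - z 1) ^ 2 ≥ 0 := sq_nonneg _
  have hy1 : y 1 = z 1 := by
    have hω2 : 0 < ω ^ 2 := by positivity
    have : (y 1 - z 1) ^ 2 = 0 := by
      by_contra h
      have h2 : 0 < (y 1 - z 1) ^ 2 := lt_of_le_of_ne hsq2 (Ne.symm h)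
      have : F 1 > 0 := by
        have := mul_pos hω2 h2
        simp only [hF]; nlinarith
      linarith
    have := pow_eq_zero_iff (n := 2) (by norm_num) |>.mp this
    linarith
  rw [hy1]
  simp [hz, hω, Real.cos_two_pi, Real.sin_two_pi]

theorem Splus_exp_not_surjective :
    (∀ x y xt : ℝ → ℝ,
      ContDiff ℝ 2 x → ContDiff ℝ 2 y → ContDiff ℝ 2 xt →
      (∀ t ∈ Set.Icc (0:ℝ) 1, deriv (deriv x) t = 0) →
      (∀ t ∈ Set.Icc (0:ℝ) 1, deriv (deriv y) t = -(deriv x t) ^ 2 * y t) →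
      (∀ t ∈ Set.Icc (0:ℝ) 1,
        deriv (deriv xt) t = 2 * y t * deriv x t * deriv y t) →
      x 1 = x 0 + 2 * Real.pi → y 1 = y 0) ∧
    (∀ x₀ y₀ z₀ y₁ z₁ : ℝ, y₁ ≠ y₀ →
      ¬ ∃ x y xt : ℝ → ℝ,
        ContDiff ℝ 2 x ∧ ContDiff ℝ 2 y ∧ ContDiff ℝ 2 xt ∧
        (∀ t ∈ Set.Icc (0:ℝ) 1, deriv (deriv x) t = 0) ∧
        (∀ t ∈ Set.Icc (0:ℝ) 1, deriv (deriv y) t = -(deriv x t) ^ 2 * y t) ∧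
        (∀ t ∈ Set.Icc (0:ℝ) 1,
          deriv (deriv xt) t = 2 * y t * deriv x t * deriv y t) ∧
        x 0 = x₀ ∧ y 0 = y₀ ∧ xt 0 = z₀ ∧
        x 1 = x₀ + 2 * Real.pi ∧ y 1 = y₁ ∧ xt 1 = z₁) := by
  constructor
  · intro x y xt hx hy hxt hxeq hyeq hxteq hx1
    exact key x y hx hy hxeq hyeq hx1
  · rintro x₀ y₀ z₀ y₁ z₁ hne ⟨x, y, xt, hx, hy, hxt, hxeq, hyeq, hxteq,
      hx0, hy0, hxt0, hx1, hy1, hxt1⟩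
    have := key x y hx hy hxeq hyeq (by rw [hx1, hx0])
    rw [hy1, hy0] at this
    exact hne this
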